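/- Let a, b, c ∈ [π/2, π) and let α ∈ [0, π] satisfy cos α = (cos a − cos b · cos c)/(sin b · sin c) (in particular the right-hand side lies in [−1, 1]). Then α ≥ a. -/
import Mathlib


open Real

/-- In a convex spherical triangle with all side lengths in [π/2, π), the angle
α at a vertex is no less than the opposite side a. -/
theorem angle_ge_opposite_side (a b c α : ℝ)
    (ha : a ∈ Set.Ico (π / 2) π) (hb : b ∈ Set.Ico (π / 2) π)
    (hc : c ∈ Set.Ico (π / 2) π) (hα : α ∈ Set.Icc (0 : ℝ) π)
    (hlaw : cos α = (cos a - cos b * cos c) / (sin b * sin c)) :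
    a ≤ α := by
  obtain ⟨ha1, ha2⟩ := ha
  obtain ⟨hb1, hb2⟩ := hb
  obtain ⟨hc1, hc2⟩ := hc
  have hpi := Real.pi_pos
  have hsb : 0 < sin b := Real.sin_pos_of_pos_of_lt_pi (lt_of_lt_of_le (by linarith) hb1) hb2
  have hsc : 0 < sin c := Real.sin_pos_of_pos_of_lt_pi (lt_of_lt_of_le (by linarith) hc1) hc2
  have hsb1 : sin b ≤ 1 := Real.sin_le_one b
  have hsc1 : sin c ≤ 1 := Real.sin_le_one c
  have hcb : cos b ≤ 0 := Real.cos_nonpos_of_pi_div_two_le_of_le hb1 (by linarith)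
  have hcc : cos c ≤ 0 := Real.cos_nonpos_of_pi_div_two_le_of_le hc1 (by linarith)
  have hca : cos a ≤ 0 := Real.cos_nonpos_of_pi_div_two_le_of_le ha1 (by linarith)
  have hnum : cos a - cos b * cos c ≤ cos a := by nlinarith
  have hs : 0 < sin b * sin c := mul_pos hsb hsc
  have hs1 : sin b * sin c ≤ 1 := by nlinarith
  have hdiv : (cos a - cos b * cos c) / (sin b * sin c) ≤ cos a - cos b * cos c := by
    rw [div_le_iff₀ hs]
    nlinarith
  have hcos : cos α ≤ cos a := by linarith [hlaw ▸ hdiv]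
  by_contra h
  push_neg at h
  have := Real.cos_lt_cos_of_nonneg_of_le_pi hα.1 (le_of_lt ha2) h
  linarith
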